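/- Let 0 < q < 1 and let f : ℕ → ℝ satisfy f(n) → ∞ and n − f(n) → ∞ as n → ∞. Define μ_n = ∑_{i=0}^{n−1} 1/(1 + q^{f(n)−i}) and, for β ∈ [0,1), c(β, q) = 1 − 1/(1 + q^{−β}) − β − ∑_{ℓ≥0} 1/(1 + q^{−ℓ−β−1}) + ∑_{ℓ≥0} 1/(1 + q^{−ℓ+β−1}). Then μ_n − f(n) − c({f(n)}, q) → 0 as n → ∞, where {x} denotes the fractional part of x. -/

import Mathlib

open Filter Finset

private lemma sig_pos {q : ℝ} (hq0 : 0 < q) (x : ℝ) : (0:ℝ) < 1 + q ^ x := by positivity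

private lemma sig_le {q : ℝ} (hq0 : 0 < q) (x : ℝ) : 1/(1+q^(-x)) ≤ q ^ x := by
  have h := Real.rpow_pos_of_pos hq0 (-x)
  rw [show q ^ x = 1 / q ^ (-x) by rw [Real.rpow_neg hq0.le, one_div, inv_inv]]
  exact one_div_le_one_div_of_le h (by linarith)

private lemma sig_compl {q : ℝ} (hq0 : 0 < q) (x : ℝ) :
    1/(1+q^x) = 1 - 1/(1+q^(-x)) := by
  have h1 : (0:ℝ) < q ^ x := Real.rpow_pos_of_pos hq0 x
  rw [Real.rpow_neg hq0.le]
  field_simp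
  ring

private lemma tail_le {q : ℝ} (hq0 : 0 < q) (hq1 : q < 1) (g : ℕ → ℝ)
    (hg0 : ∀ j, 0 ≤ g j) (hgle : ∀ j, g j ≤ q ^ j) (N : ℕ) :
    0 ≤ (∑' j, g j) - ∑ j ∈ range N, g j ∧
      (∑' j, g j) - ∑ j ∈ range N, g j ≤ q ^ N * (1-q)⁻¹ := by
  have hsg : Summable g :=
    Summable.of_nonneg_of_le hg0 hgle (summable_geometric_of_lt_one hq0.le hq1)
  have h := Summable.sum_add_tsum_nat_add N hsg
  have htail : (∑' j, g j) - ∑ j ∈ range N, g j = ∑' i, g (i + N) := by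
    rw [← h]; ring
  rw [htail]
  have hsgN : Summable fun i => g (i + N) := (summable_nat_add_iff N).mpr hsg
  have hsq : Summable fun i : ℕ => q ^ (i + N) := by
    simpa [pow_add] using (summable_geometric_of_lt_one hq0.le hq1).mul_right (q ^ N)
  constructor
  · exact tsum_nonneg fun i => hg0 _
  · calc ∑' i, g (i + N) ≤ ∑' i : ℕ, q ^ (i + N) :=
          Summable.tsum_le_tsum (fun i => hgle _) hsgN hsq
      _ = q ^ N * (1-q)⁻¹ := by
          simp_rw [pow_add]
          rw [tsum_mul_right, tsum_geometric_of_lt_one hq0.le hq1]; ring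

/-- The constant `c(β, q)` from the paper. -/
noncomputable def cConst (q β : ℝ) : ℝ :=
  1 - 1 / (1 + q ^ (-β)) - β
    - ∑' ℓ : ℕ, 1 / (1 + q ^ (-(ℓ : ℝ) - β - 1))
    + ∑' ℓ : ℕ, 1 / (1 + q ^ (-(ℓ : ℝ) + β - 1))

private lemma key (q : ℝ) (hq0 : 0 < q) (hq1 : q < 1) (β : ℝ) (hβ0 : 0 ≤ β) (hβ1 : β < 1)
    (m K : ℕ) :
    |(∑ i ∈ range (m+1+K), 1 / (1 + q ^ ((m:ℝ) + β - (i : ℝ)))) - ((m:ℝ)+β) - cConst q β|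
      ≤ (q^(m+1) + q^K) * (1-q)⁻¹ := by
  set h1 : ℕ → ℝ := fun j => 1/(1+q^(-(j:ℝ)-β)) with hh1def
  set h2 : ℕ → ℝ := fun ℓ => 1/(1+q^(-(ℓ:ℝ)+β-1)) with hh2def
  have hh1_0 : ∀ j, 0 ≤ h1 j := fun j => by
    have := sig_pos hq0 (-(j:ℝ)-β); positivity
  have hh2_0 : ∀ ℓ, 0 ≤ h2 ℓ := fun ℓ => by
    have := sig_pos hq0 (-(ℓ:ℝ)+β-1); positivity
  have hh1le : ∀ j, h1 j ≤ q ^ j := fun j => by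
    have e : -(j:ℝ)-β = -((j:ℝ)+β) := by ring
    calc h1 j = 1/(1+q^(-((j:ℝ)+β))) := by rw [hh1def]; simp only [e]
      _ ≤ q ^ ((j:ℝ)+β) := sig_le hq0 _
      _ ≤ q ^ ((j:ℝ)) :=
          Real.rpow_le_rpow_of_exponent_ge hq0 hq1.le (by linarith)
      _ = q ^ j := Real.rpow_natCast q j
  have hh2le : ∀ ℓ, h2 ℓ ≤ q ^ ℓ := fun ℓ => by
    have e : -(ℓ:ℝ)+β-1 = -((ℓ:ℝ)+1-β) := by ring
    calc h2 ℓ = 1/(1+q^(-((ℓ:ℝ)+1-β))) := by rw [hh2def]; simp only [e]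
      _ ≤ q ^ ((ℓ:ℝ)+1-β) := sig_le hq0 _
      _ ≤ q ^ ((ℓ:ℝ)) :=
          Real.rpow_le_rpow_of_exponent_ge hq0 hq1.le (by linarith)
      _ = q ^ ℓ := Real.rpow_natCast q ℓ
  have hs1 : Summable h1 :=
    Summable.of_nonneg_of_le hh1_0 hh1le (summable_geometric_of_lt_one hq0.le hq1)
  have hs2 : Summable h2 :=
    Summable.of_nonneg_of_le hh2_0 hh2le (summable_geometric_of_lt_one hq0.le hq1)
  -- first block
  have hblock1 : ∑ i ∈ range (m+1), 1 / (1 + q ^ ((m:ℝ) + β - (i : ℝ)))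
      = ((m:ℝ)+1) - ∑ j ∈ range (m+1), h1 j := by
    rw [← Finset.sum_range_reflect (fun i => 1 / (1 + q ^ ((m:ℝ) + β - (i : ℝ)))) (m+1)]
    have : ∀ j ∈ range (m+1),
        1 / (1 + q ^ ((m:ℝ) + β - ((m + 1 - 1 - j : ℕ) : ℝ))) = 1 - h1 j := by
      intro j hj
      have hjm : j ≤ m := Nat.lt_succ_iff.mp (mem_range.mp hj)
      have hc : ((m + 1 - 1 - j : ℕ) : ℝ) = (m:ℝ) - (j:ℝ) := by
        rw [Nat.add_sub_cancel, Nat.cast_sub hjm]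
      rw [hc]
      have he : (m:ℝ) + β - ((m:ℝ) - (j:ℝ)) = (j:ℝ) + β := by ring
      rw [he, sig_compl hq0, hh1def]
      have : -((j:ℝ) + β) = -(j:ℝ) - β := by ring
      rw [this]
    rw [Finset.sum_congr rfl this, Finset.sum_sub_distrib]
    simp
  -- second block
  have hblock2 : ∀ i, 1 / (1 + q ^ ((m:ℝ) + β - ((m + 1 + i : ℕ) : ℝ))) = h2 i := by
    intro i
    have : (m:ℝ) + β - ((m + 1 + i : ℕ) : ℝ) = -(i:ℝ) + β - 1 := by push_cast; ring
    rw [this]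
  have hsplit : ∑ i ∈ range (m+1+K), 1 / (1 + q ^ ((m:ℝ) + β - (i : ℝ)))
      = ((m:ℝ)+1) - ∑ j ∈ range (m+1), h1 j + ∑ i ∈ range K, h2 i := by
    rw [Finset.sum_range_add, hblock1]
    congr 1
    exact Finset.sum_congr rfl fun i _ => hblock2 i
  -- cConst rewrite
  have hc : cConst q β = 1 - β - ∑' j, h1 j + ∑' ℓ, h2 ℓ := by
    have h1shift : (∑' ℓ : ℕ, 1 / (1 + q ^ (-(ℓ : ℝ) - β - 1))) = ∑' ℓ, h1 (ℓ+1) := by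
      refine tsum_congr fun ℓ => ?_
      have : -(((ℓ:ℕ)+1 : ℕ):ℝ) - β = -(ℓ:ℝ) - β - 1 := by push_cast; ring
      rw [hh1def]; simp only [this]
    have hzero : (∑' j, h1 j) = h1 0 + ∑' ℓ, h1 (ℓ+1) := Summable.tsum_eq_zero_add hs1
    have h10 : h1 0 = 1 / (1 + q ^ (-β)) := by
      rw [hh1def]; norm_num
    rw [cConst, h1shift]
    have : (∑' ℓ : ℕ, 1 / (1 + q ^ (-(ℓ : ℝ) + β - 1))) = ∑' ℓ, h2 ℓ := rfl
    rw [this]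
    rw [hzero, h10]; ring
  rw [hsplit, hc]
  have e : ((m:ℝ)+1) - ∑ j ∈ range (m+1), h1 j + ∑ i ∈ range K, h2 i - ((m:ℝ)+β)
      - (1 - β - ∑' j, h1 j + ∑' ℓ, h2 ℓ)
      = ((∑' j, h1 j) - ∑ j ∈ range (m+1), h1 j)
        - ((∑' ℓ, h2 ℓ) - ∑ i ∈ range K, h2 i) := by ring
  rw [e]
  obtain ⟨hT1a, hT1b⟩ := tail_le hq0 hq1 h1 hh1_0 hh1le (m+1)
  obtain ⟨hT2a, hT2b⟩ := tail_le hq0 hq1 h2 hh2_0 hh2le K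
  rw [abs_le]
  constructor <;> nlinarith

/-- For `0 < q < 1` and `f : ℕ → ℝ` with `f(n) → ∞` and `n - f(n) → ∞`, the
means `μ_n = ∑_{i=0}^{n-1} 1/(1 + q^(f(n)-i))` satisfy
`μ_n = f(n) + c({f(n)}, q) + o(1)`. -/
theorem mean_asymptotics_subexponential (q : ℝ) (hq0 : 0 < q) (hq1 : q < 1)
    (f : ℕ → ℝ)
    (hf : Tendsto f atTop atTop)
    (hnf : Tendsto (fun n : ℕ => (n : ℝ) - f n) atTop atTop) :
    Tendsto
      (fun n : ℕ =>
        (∑ i ∈ range n, 1 / (1 + q ^ (f n - (i : ℝ)))) - f n - cConst q (Int.fract (f n)))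
      atTop (nhds 0) := by
  have hT : Tendsto (fun x : ℝ => q ^ x) atTop (nhds (0:ℝ)) :=
    tendsto_rpow_atTop_of_base_lt_one q (by linarith) hq1
  have hB : Tendsto (fun n : ℕ => (q ^ (f n) + q ^ ((n:ℝ) - f n - 1)) * (1-q)⁻¹)
      atTop (nhds 0) := by
    have h1 := hT.comp hf
    have h2 := hT.comp (tendsto_atTop_add_const_right atTop (-1 : ℝ) hnf)
    have := (h1.add h2).mul_const (1-q)⁻¹
    simpa [sub_eq_add_neg] using this
  apply squeeze_zero_norm' _ hB
  filter_upwards [hf.eventually_ge_atTop 0, hnf.eventually_ge_atTop 2] with n hfn0 hnfn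
  set β := Int.fract (f n) with hβdef
  have hβ0 : 0 ≤ β := Int.fract_nonneg _
  have hβ1 : β < 1 := Int.fract_lt_one _
  set m : ℕ := (⌊f n⌋).toNat with hmdef
  have hm : (m:ℝ) = (⌊f n⌋ : ℝ) := by
    have h := Int.toNat_of_nonneg (Int.floor_nonneg.mpr hfn0)
    rw [hmdef]
    exact_mod_cast h
  have hfeq : f n = (m:ℝ) + β := by
    rw [hm, hβdef]; rw [Int.fract]; ring
  have hmn : m + 2 ≤ n := by
    have h1 : (m:ℝ) ≤ f n := by rw [hfeq]; linarith
    have : (m:ℝ) + 2 ≤ (n:ℝ) := by linarith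
    exact_mod_cast this
  set K : ℕ := n - (m+1) with hKdef
  have hnK : n = m + 1 + K := by omega
  have hbound := key q hq0 hq1 β hβ0 hβ1 m K
  rw [Real.norm_eq_abs]
  calc |(∑ i ∈ range n, 1 / (1 + q ^ (f n - (i : ℝ)))) - f n - cConst q β|
      = |(∑ i ∈ range (m+1+K), 1 / (1 + q ^ ((m:ℝ) + β - (i : ℝ)))) - ((m:ℝ)+β) - cConst q β| := by
        rw [← hnK, ← hfeq]
    _ ≤ (q^(m+1) + q^K) * (1-q)⁻¹ := hbound
    _ ≤ (q ^ (f n) + q ^ ((n:ℝ) - f n - 1)) * (1-q)⁻¹ := by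
        have hq1' : 0 < 1 - q := by linarith
        have hA : (q:ℝ)^(m+1) ≤ q ^ (f n) := by
          rw [← Real.rpow_natCast q (m+1)]
          exact Real.rpow_le_rpow_of_exponent_ge hq0 hq1.le (by rw [hfeq]; push_cast; linarith)
        have hB' : (q:ℝ)^K ≤ q ^ ((n:ℝ) - f n - 1) := by
          rw [← Real.rpow_natCast q K]
          apply Real.rpow_le_rpow_of_exponent_ge hq0 hq1.le
          have hKc : (K:ℝ) = (n:ℝ) - (m:ℝ) - 1 := by
            rw [hKdef]
            have : ((n - (m+1) : ℕ) : ℝ) = (n:ℝ) - ((m+1:ℕ):ℝ) := by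
              exact_mod_cast Nat.cast_sub (by omega)
            rw [this]; push_cast; ring
          rw [hKc, hfeq]; linarith
        have hpos : (0:ℝ) < (1-q)⁻¹ := by positivity
        nlinarith [pow_pos hq0 (m+1), pow_pos hq0 K, Real.rpow_pos_of_pos hq0 (f n)]
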